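/- (Variational characterization of the von Neumann entropy.) Let ρ be a density matrix on ℂ^d. Then S(ρ) equals the infimum, over all self-adjoint (Hermitian) d×d complex matrices L, of the quantity Re tr(ρ L) + log(Re tr(exp(−L))), where exp is the matrix exponential. (Equivalently, S(ρ) is the infimum of −tr(ρ log σ) over all positive-definite density matrices σ.) -/

import Mathlib

open scoped BigOperators ComplexOrder

/-- Von Neumann entropy: `-∑ λᵢ log λᵢ` over the eigenvalues of a Hermitian matrix. -/
noncomputable def vonNeumannEntropy {d : ℕ} (ρ : Matrix (Fin d) (Fin d) ℂ) : ℝ :=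
  if h : ρ.IsHermitian then -∑ i, h.eigenvalues i * Real.log (h.eigenvalues i) else 0

namespace VNEAux

open Matrix

variable {d : ℕ}

/-- Spectral theorem with explicit complex coercion. -/
lemma spectral' {A : Matrix (Fin d) (Fin d) ℂ} (hA : A.IsHermitian) :
    A = (hA.eigenvectorUnitary : Matrix (Fin d) (Fin d) ℂ)
      * diagonal (fun j => (hA.eigenvalues j : ℂ))
      * star (hA.eigenvectorUnitary : Matrix (Fin d) (Fin d) ℂ) :=
  hA.spectral_theorem

lemma trace_conj' (U A : Matrix (Fin d) (Fin d) ℂ) (hU : star U * U = 1) :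
    (U * A * star U).trace = A.trace := by
  rw [Matrix.trace_mul_cycle, hU, Matrix.one_mul]

lemma conj_diag_entry (W : Matrix (Fin d) (Fin d) ℂ) (v : Fin d → ℝ) (i : Fin d) :
    (star W * diagonal (fun j => (v j : ℂ)) * W) i i
      = ((∑ j, v j * Complex.normSq (W j i) : ℝ) : ℂ) := by
  rw [Matrix.mul_apply, Complex.ofReal_sum]
  refine Finset.sum_congr rfl fun j _ => ?_
  rw [Matrix.mul_diagonal, Matrix.star_apply, Complex.star_def,
    mul_comm ((starRingEnd ℂ) (W j i)) ((v j : ℝ) : ℂ), mul_assoc,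
    ← Complex.normSq_eq_conj_mul_self, Complex.ofReal_mul]

lemma trace_eq_sum_eigen {A : Matrix (Fin d) (Fin d) ℂ} (hA : A.IsHermitian) :
    A.trace = ((∑ i, hA.eigenvalues i : ℝ) : ℂ) := by
  conv_lhs => rw [spectral' hA]
  rw [Matrix.trace_mul_cycle, Matrix.mem_unitaryGroup_iff'.mp hA.eigenvectorUnitary.2,
    Matrix.one_mul, Matrix.trace_diagonal, Complex.ofReal_sum]

lemma trace_exp_conj (U : Matrix (Fin d) (Fin d) ℂ) (v : Fin d → ℝ)
    (hU1 : U * star U = 1) (hU2 : star U * U = 1) :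
    (NormedSpace.exp (-(U * diagonal (fun i => (v i : ℂ)) * star U))).trace
      = ((∑ i, Real.exp (-v i) : ℝ) : ℂ) := by
  have hUinv : U⁻¹ = star U := Matrix.inv_eq_right_inv hU1
  have hUnit : IsUnit U := ⟨⟨U, star U, hU1, hU2⟩, rfl⟩
  have hdiag : diagonal (fun i => ((-v i : ℝ) : ℂ)) = -diagonal (fun i => ((v i : ℝ) : ℂ)) := by
    have hfun : (fun i => ((-v i : ℝ) : ℂ)) = fun i => -((v i : ℝ) : ℂ) :=
      funext fun i => by push_cast; ring
    rw [hfun, Matrix.diagonal_neg]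
  have e : -(U * diagonal (fun i => (v i : ℂ)) * star U)
      = U * diagonal (fun i => ((-v i : ℝ) : ℂ)) * U⁻¹ := by
    rw [hUinv, hdiag, Matrix.mul_neg, Matrix.neg_mul]
  rw [e, Matrix.exp_conj U _ hUnit, Matrix.exp_diagonal, hUinv, Matrix.trace_mul_cycle,
    hU2, Matrix.one_mul, Matrix.trace_diagonal, Complex.ofReal_sum]
  exact Finset.sum_congr rfl fun i _ => by
    rw [Pi.coe_exp, ← Complex.exp_eq_exp_ℂ, ← Complex.ofReal_exp]

/-- Classical Gibbs variational inequality. -/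
lemma gibbs (lam q : Fin d → ℝ) {Z : ℝ}
    (hlam : ∀ i, 0 ≤ lam i) (hsum : ∑ i, lam i = 1)
    (hZ : ∑ i, Real.exp (-q i) ≤ Z) :
    -∑ i, lam i * Real.log (lam i) ≤ (∑ i, lam i * q i) + Real.log Z := by
  have hne : (Finset.univ : Finset (Fin d)).Nonempty := by
    rcases (Finset.univ : Finset (Fin d)).eq_empty_or_nonempty with h | h
    · rw [h, Finset.sum_empty] at hsum; exact absurd hsum zero_ne_one
    · exact h
  have hZ0 : 0 < Z :=
    lt_of_lt_of_le (Finset.sum_pos (fun i _ => Real.exp_pos _) hne) hZ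
  have key : ∀ i, lam i - Real.exp (-q i) / Z
      ≤ lam i * q i + lam i * Real.log Z + lam i * Real.log (lam i) := by
    intro i
    rcases eq_or_lt_of_le (hlam i) with h0 | hpos
    · rw [← h0]
      have : 0 ≤ Real.exp (-q i) / Z := by positivity
      simp only [zero_sub, zero_mul, add_zero, zero_add]
      linarith
    · have hx : 0 < Real.exp (-q i) / (Z * lam i) := by positivity
      have hlog := Real.log_le_sub_one_of_pos hx
      rw [Real.log_div (Real.exp_ne_zero _) (by positivity), Real.log_exp,
        Real.log_mul (ne_of_gt hZ0) (ne_of_gt hpos)] at hlog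
      have h2 := mul_le_mul_of_nonneg_left hlog (le_of_lt hpos)
      have h3 : lam i * (Real.exp (-q i) / (Z * lam i) - 1) = Real.exp (-q i) / Z - lam i := by
        field_simp
      rw [h3] at h2
      nlinarith [h2]
  have hsum2 := Finset.sum_le_sum (fun i (_ : i ∈ Finset.univ) => key i)
  have e1 : ∑ i, (lam i - Real.exp (-q i) / Z) = 1 - (∑ i, Real.exp (-q i)) / Z := by
    rw [Finset.sum_sub_distrib, hsum, ← Finset.sum_div]
  have e2 : ∑ i, (lam i * q i + lam i * Real.log Z + lam i * Real.log (lam i))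
      = (∑ i, lam i * q i) + Real.log Z + ∑ i, lam i * Real.log (lam i) := by
    rw [Finset.sum_add_distrib, Finset.sum_add_distrib, ← Finset.sum_mul, hsum, one_mul]
  rw [e1, e2] at hsum2
  have h4 : (∑ i, Real.exp (-q i)) / Z ≤ 1 := by
    rw [div_le_one hZ0]; exact hZ
  linarith

/-- Jensen's inequality for `exp`. -/
lemma jensen (w μ : Fin d → ℝ) (hw : ∀ j, 0 ≤ w j) (hw1 : ∑ j, w j = 1) :
    Real.exp (-∑ j, μ j * w j) ≤ ∑ j, w j * Real.exp (-μ j) := by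
  have h := convexOn_exp.map_sum_le (t := Finset.univ) (w := w)
    (p := fun j => -μ j) (fun j _ => hw j) hw1 (fun j _ => Set.mem_univ _)
  have e : ∑ j, w j • (-μ j) = -∑ j, μ j * w j := by
    rw [← Finset.sum_neg_distrib]
    exact Finset.sum_congr rfl fun j _ => by rw [smul_eq_mul]; ring
  rw [e] at h
  simpa [smul_eq_mul] using h

/-- The lower bound, in terms of abstract spectral decompositions. -/
lemma lower_bound_core (U V : Matrix (Fin d) (Fin d) ℂ) (lam μ : Fin d → ℝ)
    (hU1 : U * star U = 1) (hU2 : star U * U = 1)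
    (hV1 : V * star V = 1) (hV2 : star V * V = 1)
    (hlam0 : ∀ i, 0 ≤ lam i) (hlam1 : ∑ i, lam i = 1) :
    -∑ i, lam i * Real.log (lam i) ≤
      (((U * diagonal (fun i => (lam i : ℂ)) * star U)
          * (V * diagonal (fun j => (μ j : ℂ)) * star V)).trace).re
      + Real.log (((NormedSpace.exp
          (-(V * diagonal (fun j => (μ j : ℂ)) * star V))).trace).re) := by
  classical
  set W : Matrix (Fin d) (Fin d) ℂ := star V * U with hWdef
  have hsW : star W = star U * V := by rw [hWdef, Matrix.star_mul, star_star]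
  have hW1 : W * star W = 1 := by
    have h : W * star W = star V * (U * star U) * V := by
      rw [hWdef, hsW]; noncomm_ring
    rw [h, hU1, Matrix.mul_one, hV2]
  have hW2 : star W * W = 1 := by
    have h : star W * W = star U * (V * star V) * U := by
      rw [hWdef, hsW]; noncomm_ring
    rw [h, hV1, Matrix.mul_one, hU2]
  have col_sum : ∀ i, ∑ j, Complex.normSq (W j i) = 1 := by
    intro i
    have h : (star W * W) i i = (1 : Matrix (Fin d) (Fin d) ℂ) i i := by rw [hW2]
    rw [Matrix.mul_apply, Matrix.one_apply_eq] at h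
    have h2 : ((∑ j, Complex.normSq (W j i) : ℝ) : ℂ) = 1 := by
      rw [Complex.ofReal_sum, ← h]
      refine Finset.sum_congr rfl fun j _ => ?_
      rw [Matrix.star_apply, Complex.star_def, Complex.normSq_eq_conj_mul_self]
    exact_mod_cast h2
  have row_sum : ∀ j, ∑ i, Complex.normSq (W j i) = 1 := by
    intro j
    have h : (W * star W) j j = (1 : Matrix (Fin d) (Fin d) ℂ) j j := by rw [hW1]
    rw [Matrix.mul_apply, Matrix.one_apply_eq] at h
    have h2 : ((∑ i, Complex.normSq (W j i) : ℝ) : ℂ) = 1 := by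
      rw [Complex.ofReal_sum, ← h]
      refine Finset.sum_congr rfl fun i _ => ?_
      rw [Matrix.star_apply, Complex.star_def, ← Complex.mul_conj]
    exact_mod_cast h2
  set q : Fin d → ℝ := fun i => ∑ j, μ j * Complex.normSq (W j i) with hqdef
  have htr : (((U * diagonal (fun i => (lam i : ℂ)) * star U)
      * (V * diagonal (fun j => (μ j : ℂ)) * star V)).trace) = ((∑ i, lam i * q i : ℝ) : ℂ) := by
    have e : (U * diagonal (fun i => (lam i : ℂ)) * star U)
        * (V * diagonal (fun j => (μ j : ℂ)) * star V)
        = U * (diagonal (fun i => (lam i : ℂ))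
            * (star W * diagonal (fun j => (μ j : ℂ)) * W)) * star U := by
      calc (U * diagonal (fun i => (lam i : ℂ)) * star U)
            * (V * diagonal (fun j => (μ j : ℂ)) * star V)
          = ((U * diagonal (fun i => (lam i : ℂ)) * star U)
            * (V * diagonal (fun j => (μ j : ℂ)) * star V)) * (U * star U) := by
            rw [hU1, Matrix.mul_one]
        _ = U * (diagonal (fun i => (lam i : ℂ))
            * ((star U * V) * diagonal (fun j => (μ j : ℂ)) * (star V * U))) * star U := by
            noncomm_ring
        _ = U * (diagonal (fun i => (lam i : ℂ))
            * (star W * diagonal (fun j => (μ j : ℂ)) * W)) * star U := by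
            rw [hsW, hWdef]
    rw [e, trace_conj' U _ hU2, Matrix.trace, Complex.ofReal_sum]
    refine Finset.sum_congr rfl fun i _ => ?_
    rw [Matrix.diag_apply, Matrix.diagonal_mul, conj_diag_entry, Complex.ofReal_mul]
  have hexp : (NormedSpace.exp (-(V * diagonal (fun j => (μ j : ℂ)) * star V))).trace
      = ((∑ j, Real.exp (-μ j) : ℝ) : ℂ) := trace_exp_conj V μ hV1 hV2
  have hZle : ∑ i, Real.exp (-q i) ≤ ∑ j, Real.exp (-μ j) := by
    calc ∑ i, Real.exp (-q i)
        ≤ ∑ i, ∑ j, Complex.normSq (W j i) * Real.exp (-μ j) :=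
          Finset.sum_le_sum fun i _ =>
            jensen (fun j => Complex.normSq (W j i)) μ
              (fun j => Complex.normSq_nonneg _) (col_sum i)
      _ = ∑ j, Real.exp (-μ j) := by
          rw [Finset.sum_comm]
          refine Finset.sum_congr rfl fun j _ => ?_
          rw [← Finset.sum_mul, row_sum j, one_mul]
  rw [htr, hexp, Complex.ofReal_re, Complex.ofReal_re]
  exact gibbs lam q hlam0 hlam1 hZle

/-- The lower bound: every candidate value is at least the von Neumann entropy. -/
lemma lower_bound {ρ L : Matrix (Fin d) (Fin d) ℂ}
    (hρ : ρ.PosSemidef) (hρtr : ρ.trace = 1) (hL : L.IsHermitian) :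
    vonNeumannEntropy ρ ≤ ((ρ * L).trace).re
      + Real.log (((NormedSpace.exp (-L)).trace).re) := by
  have hlam1 : ∑ i, hρ.1.eigenvalues i = 1 := by
    have h := trace_eq_sum_eigen hρ.1
    rw [hρtr] at h
    exact_mod_cast h.symm
  have hvne : vonNeumannEntropy ρ
      = -∑ i, hρ.1.eigenvalues i * Real.log (hρ.1.eigenvalues i) := by
    unfold vonNeumannEntropy
    rw [dif_pos hρ.1]
  have h := lower_bound_core
    (hρ.1.eigenvectorUnitary : Matrix (Fin d) (Fin d) ℂ)
    (hL.eigenvectorUnitary : Matrix (Fin d) (Fin d) ℂ)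
    hρ.1.eigenvalues hL.eigenvalues
    (Matrix.mem_unitaryGroup_iff.mp hρ.1.eigenvectorUnitary.2)
    (Matrix.mem_unitaryGroup_iff'.mp hρ.1.eigenvectorUnitary.2)
    (Matrix.mem_unitaryGroup_iff.mp hL.eigenvectorUnitary.2)
    (Matrix.mem_unitaryGroup_iff'.mp hL.eigenvectorUnitary.2)
    hρ.eigenvalues_nonneg hlam1
  rw [← spectral' hρ.1, ← spectral' hL] at h
  rw [hvne]
  exact h

/-- The upper bound family: approximate minimizers. -/
lemma upper_mem {ρ : Matrix (Fin d) (Fin d) ℂ}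
    (hρ : ρ.PosSemidef) (hρtr : ρ.trace = 1) (c : ℝ) :
    ∃ L : Matrix (Fin d) (Fin d) ℂ, L.IsHermitian ∧
      vonNeumannEntropy ρ
        + Real.log (1 + ((Finset.univ.filter fun i => ¬ 0 < hρ.1.eigenvalues i).card : ℝ)
            * Real.exp (-c))
        = ((ρ * L).trace).re + Real.log (((NormedSpace.exp (-L)).trace).re) := by
  classical
  set U : Matrix (Fin d) (Fin d) ℂ := (hρ.1.eigenvectorUnitary : Matrix (Fin d) (Fin d) ℂ)
    with hUdef
  have hU1 : U * star U = 1 := Matrix.mem_unitaryGroup_iff.mp hρ.1.eigenvectorUnitary.2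
  have hU2 : star U * U = 1 := Matrix.mem_unitaryGroup_iff'.mp hρ.1.eigenvectorUnitary.2
  have hlam0 : ∀ i, 0 ≤ hρ.1.eigenvalues i := hρ.eigenvalues_nonneg
  have hlam1 : ∑ i, hρ.1.eigenvalues i = 1 := by
    have h := trace_eq_sum_eigen hρ.1
    rw [hρtr] at h
    exact_mod_cast h.symm
  set lam : Fin d → ℝ := hρ.1.eigenvalues with hlamdef
  set ℓ : Fin d → ℝ := fun i => if 0 < lam i then -Real.log (lam i) else c with hℓdef
  refine ⟨U * diagonal (fun i => (ℓ i : ℂ)) * star U, ?_, ?_⟩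
  · have hD : (diagonal (fun i => ((ℓ i : ℝ) : ℂ))).IsHermitian := by
      rw [Matrix.IsHermitian, Matrix.diagonal_conjTranspose]
      have hst : (star fun i => ((ℓ i : ℝ) : ℂ)) = fun i => ((ℓ i : ℝ) : ℂ) := by
        funext i
        rw [Pi.star_apply, Complex.star_def, Complex.conj_ofReal]
      rw [hst]
    have := Matrix.isHermitian_mul_mul_conjTranspose U hD
    rwa [← Matrix.star_eq_conjTranspose U] at this
  · have h1 : (ρ * (U * diagonal (fun i => (ℓ i : ℂ)) * star U)).trace
        = ((∑ i, lam i * ℓ i : ℝ) : ℂ) := by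
      have e : ρ * (U * diagonal (fun i => (ℓ i : ℂ)) * star U)
          = U * (diagonal (fun i => (lam i : ℂ)) * diagonal (fun i => (ℓ i : ℂ))) * star U := by
        conv_lhs => rw [spectral' hρ.1]
        calc (U * diagonal (fun i => (lam i : ℂ)) * star U)
              * (U * diagonal (fun i => (ℓ i : ℂ)) * star U)
            = U * (diagonal (fun i => (lam i : ℂ)) * ((star U * U)
                * diagonal (fun i => (ℓ i : ℂ)))) * star U := by noncomm_ring
          _ = U * (diagonal (fun i => (lam i : ℂ)) * diagonal (fun i => (ℓ i : ℂ))) * star U := by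
              rw [hU2, Matrix.one_mul]
      rw [e, trace_conj' U _ hU2, Matrix.diagonal_mul_diagonal, Matrix.trace_diagonal,
        Complex.ofReal_sum]
      exact Finset.sum_congr rfl fun i _ => by rw [Complex.ofReal_mul]
    have h2 : ∑ i, lam i * ℓ i = -∑ i, lam i * Real.log (lam i) := by
      rw [← Finset.sum_neg_distrib]
      refine Finset.sum_congr rfl fun i _ => ?_
      by_cases h : 0 < lam i
      · rw [hℓdef]; simp only [if_pos h]; ring
      · have h0 : lam i = 0 := le_antisymm (not_lt.1 h) (hlam0 i)
        rw [hℓdef]; simp [h0]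
    have h3 : (NormedSpace.exp (-(U * diagonal (fun i => (ℓ i : ℂ)) * star U))).trace
        = ((∑ i, Real.exp (-ℓ i) : ℝ) : ℂ) := trace_exp_conj U ℓ hU1 hU2
    have h4 : ∑ i, Real.exp (-ℓ i)
        = 1 + ((Finset.univ.filter fun i => ¬ 0 < lam i).card : ℝ) * Real.exp (-c) := by
      have e : ∀ i, Real.exp (-ℓ i) = lam i + (if 0 < lam i then 0 else Real.exp (-c)) := by
        intro i
        by_cases h : 0 < lam i
        · rw [hℓdef]; simp only [if_pos h, neg_neg, Real.exp_log h, add_zero]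
        · have h0 : lam i = 0 := le_antisymm (not_lt.1 h) (hlam0 i)
          rw [hℓdef]; simp [h, h0]
      rw [Finset.sum_congr rfl fun i _ => e i, Finset.sum_add_distrib, hlam1]
      congr 1
      rw [Finset.sum_ite, Finset.sum_const_zero, zero_add, Finset.sum_const, nsmul_eq_mul]
    have hvne : vonNeumannEntropy ρ = -∑ i, lam i * Real.log (lam i) := by
      unfold vonNeumannEntropy
      rw [dif_pos hρ.1]
    rw [h1, h3, Complex.ofReal_re, Complex.ofReal_re, h2, h4, hvne]

end VNEAux

/-- **Variational characterization of the von Neumann entropy.**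
For a density matrix `ρ`, `S(ρ)` is the infimum over Hermitian matrices `L` of
`Re tr(ρ L) + log (Re tr (exp (-L)))`. -/
theorem vonNeumannEntropy_eq_sInf {d : ℕ} (ρ : Matrix (Fin d) (Fin d) ℂ)
    (hρ : ρ.PosSemidef) (hρtr : ρ.trace = 1) :
    vonNeumannEntropy ρ =
      sInf {x : ℝ | ∃ L : Matrix (Fin d) (Fin d) ℂ, L.IsHermitian ∧
        x = ((ρ * L).trace).re + Real.log (((NormedSpace.exp (-L)).trace).re)} := by
  classical
  set S := {x : ℝ | ∃ L : Matrix (Fin d) (Fin d) ℂ, L.IsHermitian ∧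
    x = ((ρ * L).trace).re + Real.log (((NormedSpace.exp (-L)).trace).re)} with hSdef
  set k : ℝ := ((Finset.univ.filter fun i => ¬ 0 < hρ.1.eigenvalues i).card : ℝ) with hkdef
  have hk : (0 : ℝ) ≤ k := by rw [hkdef]; positivity
  have hmem : ∀ c : ℝ, vonNeumannEntropy ρ + Real.log (1 + k * Real.exp (-c)) ∈ S := by
    intro c
    obtain ⟨L, hL, hEq⟩ := VNEAux.upper_mem hρ hρtr c
    exact ⟨L, hL, hEq⟩
  have hlb : ∀ x ∈ S, vonNeumannEntropy ρ ≤ x := by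
    rintro x ⟨L, hL, rfl⟩
    exact VNEAux.lower_bound hρ hρtr hL
  have hbdd : BddBelow S := ⟨_, fun x hx => hlb x hx⟩
  have hne : S.Nonempty := ⟨_, hmem 0⟩
  refine le_antisymm (le_csInf hne hlb) ?_
  refine le_of_forall_pos_le_add fun ε hε => ?_
  set c : ℝ := Real.log ((k + 1) / ε) with hcdef
  have hexpc : Real.exp (-c) = ε / (k + 1) := by
    rw [hcdef, ← Real.log_inv, inv_div, Real.exp_log (by positivity)]
  have h1 : k * Real.exp (-c) ≤ ε := by
    rw [hexpc]
    have hle : k * (ε / (k + 1)) ≤ (k + 1) * (ε / (k + 1)) :=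
      mul_le_mul_of_nonneg_right (by linarith) (by positivity)
    have he : (k + 1) * (ε / (k + 1)) = ε := by field_simp
    linarith
  have hpos : (0 : ℝ) < 1 + k * Real.exp (-c) := by positivity
  have h2 : Real.log (1 + k * Real.exp (-c)) ≤ ε := by
    have := Real.log_le_sub_one_of_pos hpos
    linarith
  calc sInf S ≤ vonNeumannEntropy ρ + Real.log (1 + k * Real.exp (-c)) :=
        csInf_le hbdd (hmem c)
    _ ≤ vonNeumannEntropy ρ + ε := by linarith
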